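/- arXiv:2408.12582 — 4 statements merged into one kernel-verified Lean document; each statement's English description precedes it below -/
import Mathlib

section
/- Let L > 0, μ > 0 be real numbers and let f : ℝ → ℝ be twice differentiable with deriv (deriv f) z = μ^2 · f z for all z, and f(-L) = 0. Then the derivative of f at the interface satisfies deriv f 0 = μ · (cosh(μL)/sinh(μL)) · f(0), i.e. deriv f 0 = μ · coth(μL) · f(0). -/
theorem stmt_1 (L μ : ℝ) (hL : 0 < L) (hμ : 0 < μ) (f : ℝ → ℝ)
    (hf1 : Differentiable ℝ f) (hf2 : Differentiable ℝ (deriv f))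
    (hode : ∀ z : ℝ, deriv (deriv f) z = μ ^ 2 * f z)
    (hbc : f (-L) = 0) :
    deriv f 0 = μ * (Real.cosh (μ * L) / Real.sinh (μ * L)) * f 0 := by
  set W : ℝ → ℝ := fun z =>
    deriv f z * Real.sinh (μ * (z + L)) - μ * f z * Real.cosh (μ * (z + L)) with hW
  have hder : ∀ z : ℝ, HasDerivAt W 0 z := by
    intro z
    have hu : HasDerivAt (fun z : ℝ => μ * (z + L)) μ z := by
      simpa using (((hasDerivAt_id z).add_const L).const_mul μ)
    have hsinh : HasDerivAt (fun z : ℝ => Real.sinh (μ * (z + L)))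
        (Real.cosh (μ * (z + L)) * μ) z :=
      (Real.hasDerivAt_sinh _).comp z hu
    have hcosh : HasDerivAt (fun z : ℝ => Real.cosh (μ * (z + L)))
        (Real.sinh (μ * (z + L)) * μ) z :=
      (Real.hasDerivAt_cosh _).comp z hu
    have hf' : HasDerivAt (deriv f) (μ ^ 2 * f z) z := by
      simpa [hode z] using (hf2 z).hasDerivAt
    have hf0 : HasDerivAt f (deriv f z) z := (hf1 z).hasDerivAt
    have h1 := (hf'.mul hsinh).sub (((hf0.const_mul μ)).mul hcosh)
    have h2 : HasDerivAt W _ z := h1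
    convert h2 using 1
    ring
  have hconst : ∀ x y : ℝ, W x = W y :=
    is_const_of_deriv_eq_zero (fun z => (hder z).differentiableAt)
      (fun z => (hder z).deriv)
  have h0 : W (-L) = 0 := by simp [hW, hbc]
  have h1 : W 0 = 0 := (hconst 0 (-L)).trans h0
  have hs : Real.sinh (μ * L) ≠ 0 :=
    ne_of_gt (Real.sinh_pos_iff.mpr (by positivity))
  have h2 : deriv f 0 * Real.sinh (μ * L) = μ * f 0 * Real.cosh (μ * L) := by
    have := h1
    simp only [hW] at this
    rw [sub_eq_zero] at this
    simpa using this
  field_simp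
  linarith [h2]
end

section
/- Let c, K, L, s > 0 and ω ∈ ℝ, and set μ = √(cs/K). Suppose e₂ : ℝ → ℝ is twice differentiable with K · deriv (deriv e₂) z = c·s·e₂ z for all z, e₂(−L) = 0 and e₂(0) = γ, where γ ∈ ℝ. Define e₁ = −(K/s) · deriv e₂ 0 and γ' = ω·e₁ + (1−ω)·γ. Then γ' = ρ(s,ω) · γ, where ρ(s,ω) = 1 − ω − ω·√(cK/s)·coth(√(cs/K)·L). -/
theorem stmt_2 (c K L s ω γ : ℝ) (hc : 0 < c) (hK : 0 < K) (hL : 0 < L) (hs : 0 < s)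
    (e₂ : ℝ → ℝ) (h1 : Differentiable ℝ e₂) (h2 : Differentiable ℝ (deriv e₂))
    (hode : ∀ z : ℝ, K * deriv (deriv e₂) z = c * s * e₂ z)
    (hbot : e₂ (-L) = 0) (htop : e₂ 0 = γ)
    (e₁ γ' : ℝ) (he₁ : e₁ = -(K / s) * deriv e₂ 0)
    (hγ' : γ' = ω * e₁ + (1 - ω) * γ) :
    γ' = (1 - ω - ω * Real.sqrt (c * K / s) *
        (Real.cosh (Real.sqrt (c * s / K) * L) / Real.sinh (Real.sqrt (c * s / K) * L))) * γ := by
  set μ := Real.sqrt (c * s / K) with hμdef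
  have hμpos : 0 < μ := Real.sqrt_pos.mpr (by positivity)
  have hμsq : μ ^ 2 = c * s / K := Real.sq_sqrt (by positivity)
  have hode' : ∀ z, deriv (deriv e₂) z = μ ^ 2 * e₂ z := by
    intro z
    rw [hμsq]
    field_simp
    linarith [hode z]
  have hconst : ∀ ε : ℝ, ε ^ 2 = 1 → ∀ x y : ℝ,
      (deriv e₂ x - ε * μ * e₂ x) * Real.exp (ε * μ * x)
        = (deriv e₂ y - ε * μ * e₂ y) * Real.exp (ε * μ * y) := by
    intro ε hε
    have hF : ∀ z, HasDerivAt
        (fun z => (deriv e₂ z - ε * μ * e₂ z) * Real.exp (ε * μ * z)) 0 z := by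
      intro z
      have hd2 : HasDerivAt (deriv e₂) (deriv (deriv e₂) z) z := (h2 z).hasDerivAt
      have hd1 : HasDerivAt e₂ (deriv e₂ z) z := (h1 z).hasDerivAt
      have hlin : HasDerivAt (fun z : ℝ => ε * μ * z) (ε * μ) z := by
        simpa using (hasDerivAt_id z).const_mul (ε * μ)
      have hexp : HasDerivAt (fun z => Real.exp (ε * μ * z))
          (Real.exp (ε * μ * z) * (ε * μ)) z := hlin.exp
      have hmul := (hd2.sub (hd1.const_mul (ε * μ))).mul hexp
      refine hmul.congr_deriv (Eq.symm ?_)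
      simp only [Pi.sub_apply]
      have h2z := hode' z
      linear_combination (-(Real.exp (ε * μ * z))) * h2z
        + (μ ^ 2 * e₂ z * Real.exp (ε * μ * z)) * hε
    intro x y
    exact is_const_of_deriv_eq_zero (fun z => (hF z).differentiableAt)
      (fun z => (hF z).deriv) x y
  set a := deriv e₂ 0 with ha
  set b := deriv e₂ (-L) with hb
  set E := Real.exp (μ * L) with hE
  have hEpos : 0 < E := Real.exp_pos _
  have hE1 : 1 < E := by
    rw [hE]
    exact Real.one_lt_exp_iff.mpr (by positivity)
  have eq1 : a - μ * γ = b * E⁻¹ := by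
    have := hconst 1 (by norm_num) 0 (-L)
    simp only [one_mul, mul_zero, Real.exp_zero, mul_one, htop, hbot, sub_zero] at this
    rw [mul_neg, Real.exp_neg] at this
    exact this
  have eq2 : a + μ * γ = b * E := by
    have := hconst (-1) (by norm_num) 0 (-L)
    simp [htop, hbot, hE] at this
    linarith [this]
  have hEne : E ^ 2 - 1 ≠ 0 := by nlinarith
  have hAval : a * (E ^ 2 - 1) = μ * γ * (E ^ 2 + 1) := by
    have h1' : (a - μ * γ) * E = b := by
      field_simp at eq1
      linarith [eq1]
    have h2' : (a + μ * γ) = ((a - μ * γ) * E) * E := by rw [h1']; exact eq2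
    nlinarith [h2']
  have hsinh : Real.sinh (μ * L) = (E - E⁻¹) / 2 := by
    rw [Real.sinh_eq, hE, ← Real.exp_neg]
  have hcosh : Real.cosh (μ * L) = (E + E⁻¹) / 2 := by
    rw [Real.cosh_eq, hE, ← Real.exp_neg]
  have hsinhpos : 0 < Real.sinh (μ * L) := Real.sinh_pos_iff.mpr (by positivity)
  have hsqrt : Real.sqrt (c * K / s) = (K / s) * μ := by
    rw [hμdef, ← Real.sqrt_sq (le_of_lt (show (0:ℝ) < K / s by positivity)),
      ← Real.sqrt_mul (by positivity)]
    congr 1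
    field_simp
  rw [hγ', he₁, hsqrt, hcosh, hsinh]
  have hEne' : E ≠ 0 := ne_of_gt hEpos
  have hs' : s ≠ 0 := ne_of_gt hs
  have hEne2 : E * E - 1 ≠ 0 := by nlinarith
  field_simp
  linear_combination (-(ω * K)) * hAval
end

section
/- Let c, K, L, s > 0 and define ρ(s,ω) = 1 − ω − ω·√(cK/s)·coth(√(cs/K)·L) and ω_opt(s) = 1 / (1 + √(cK/s)·coth(√(cs/K)·L)). Then ω_opt(s) lies in the open interval (0, 1) and ρ(s, ω_opt(s)) = 0; moreover ω_opt(s) is the unique real ω with ρ(s,ω) = 0. -/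
theorem stmt_3 (c K L s : ℝ) (hc : 0 < c) (hK : 0 < K) (hL : 0 < L) (hs : 0 < s) :
    let coth : ℝ → ℝ := fun x => Real.cosh x / Real.sinh x
    let ρ : ℝ → ℝ := fun ω =>
      1 - ω - ω * Real.sqrt (c * K / s) * coth (Real.sqrt (c * s / K) * L)
    let ωopt : ℝ := 1 / (1 + Real.sqrt (c * K / s) * coth (Real.sqrt (c * s / K) * L))
    ωopt ∈ Set.Ioo (0 : ℝ) 1 ∧ ρ ωopt = 0 ∧ ∀ ω : ℝ, ρ ω = 0 → ω = ωopt := by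
  intro coth ρ ωopt
  set x := Real.sqrt (c * s / K) * L with hx
  have hxpos : 0 < x := mul_pos (Real.sqrt_pos.mpr (by positivity)) hL
  have hcoth : 0 < coth x := by
    have h1 : 0 < Real.sinh x := Real.sinh_pos_iff.mpr hxpos
    have h2 : 0 < Real.cosh x := Real.cosh_pos x
    exact div_pos h2 h1
  have ha : 0 < Real.sqrt (c * K / s) := Real.sqrt_pos.mpr (by positivity)
  set a := Real.sqrt (c * K / s)
  have hD : 1 < 1 + a * coth x := by nlinarith
  have hDpos : 0 < 1 + a * coth x := by linarith
  have hωopt : ωopt = 1 / (1 + a * coth x) := rfl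
  refine ⟨⟨by rw [hωopt]; positivity, by rw [hωopt]; exact (div_lt_one hDpos).mpr hD⟩, ?_, ?_⟩
  · show 1 - ωopt - ωopt * a * coth x = 0
    rw [hωopt]
    field_simp
    ring
  · intro ω hρ
    have : 1 - ω - ω * a * coth x = 0 := hρ
    have hω : ω * (1 + a * coth x) = 1 := by ring_nf; ring_nf at this; linarith
    rw [hωopt, eq_div_iff (ne_of_gt hDpos)]
    exact hω
end

section
/- Let c, K, Δt, L > 0, let M ≥ 2 be a natural number, set Δz = L/M, a = (2/3)·c·Δz + 2·K·Δt/Δz, b = (1/6)·c·Δz − K·Δt/Δz, and let T be the (M−1)×(M−1) symmetric tridiagonal Toeplitz matrix with diagonal a and off-diagonal b. Let u ∈ ℝ^{M−1} be the vector (0, …, 0, b)ᵀ. Then the scalar S := uᵀ · T⁻¹ · u − a/2 satisfies S = b²·α − a/2, where α = (Δz/L) · ∑_{j=1}^{M−1} sin²(j·π·Δz/L) / ((a/2) − b·cos(j·π·Δz/L)). -/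
open Real Finset

private lemma aux_fin_sum_ite {N : ℕ} (c : ℕ) (f : Fin N → ℝ) :
    (∑ p : Fin N, if (p : ℕ) = c then f p else 0) = if h : c < N then f ⟨c, h⟩ else 0 := by
  split_ifs with h
  · rw [Finset.sum_eq_single (⟨c, h⟩ : Fin N)]
    · simp
    · intro p _ hp
      rw [if_neg fun hc => hp (Fin.ext hc)]
    · intro hmem; exact absurd (Finset.mem_univ _) hmem
  · apply Finset.sum_eq_zero
    intro p _
    rw [if_neg]
    intro hc
    exact h (hc ▸ p.isLt)

private lemma aux_icc_sum (M : ℕ) (hM : 1 ≤ M) (f : ℕ → ℝ) :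
    ∑ j ∈ Finset.Icc 1 (M - 1), f j = (∑ j ∈ Finset.range M, f j) - f 0 := by
  have h : Finset.range M = insert 0 (Finset.Icc 1 (M - 1)) := by
    ext x; simp [Finset.mem_range, Finset.mem_Icc]; omega
  rw [h, Finset.sum_insert (by simp)]; ring

private lemma aux_cos_sum (M m : ℕ) (hM : 1 ≤ M) (h0 : 0 < m) (h2 : m < 2 * M) :
    ∑ j ∈ Finset.range M, Real.cos ((j : ℝ) * ((m : ℝ) * Real.pi / M)) =
      if Even m then 0 else 1 := by
  have hMR : (0:ℝ) < M := by exact_mod_cast Nat.pos_of_ne_zero (by omega)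
  set φ : ℝ := (m : ℝ) * Real.pi / M with hφ
  have hφ0 : 0 < φ := by
    apply div_pos (mul_pos (by exact_mod_cast h0) Real.pi_pos) hMR
  have hφ2 : φ < 2 * Real.pi := by
    rw [hφ, div_lt_iff₀ hMR]
    have : (m : ℝ) < 2 * M := by exact_mod_cast h2
    nlinarith [Real.pi_pos]
  set z : ℂ := Complex.exp (φ * Complex.I) with hz
  have hz1 : z ≠ 1 := by
    rw [hz, Ne, Complex.exp_eq_one_iff]
    rintro ⟨n, hn⟩
    have hre : φ = (n : ℝ) * (2 * Real.pi) := by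
      have him := congrArg Complex.im hn
      simpa using him
    rcases lt_trichotomy n 0 with h | h | h
    · have : (n : ℝ) ≤ -1 := by exact_mod_cast (by omega : n ≤ -1)
      nlinarith [Real.pi_pos]
    · subst h; simp at hre; nlinarith
    · have : (1:ℝ) ≤ (n : ℝ) := by exact_mod_cast (by omega : 1 ≤ n)
      nlinarith [Real.pi_pos]
  have hzj : ∀ j : ℕ, z ^ j = Complex.exp ((j * φ : ℝ) * Complex.I) := by
    intro j
    rw [hz, ← Complex.exp_nat_mul]
    push_cast
    ring_nf
  have hre : ∀ j : ℕ, (z ^ j).re = Real.cos ((j : ℝ) * φ) := by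
    intro j; rw [hzj j, Complex.exp_ofReal_mul_I_re]
  have hzM : z ^ M = (-1 : ℂ) ^ m := by
    rw [hzj M, ← Complex.exp_pi_mul_I, ← Complex.exp_nat_mul]
    congr 1
    have : ((M : ℝ) * φ : ℝ) = (m : ℝ) * Real.pi := by
      rw [hφ]; field_simp
    rw [this]; push_cast; ring
  have hgeom : ∑ j ∈ Finset.range M, z ^ j = (z ^ M - 1) / (z - 1) := geom_sum_eq hz1 M
  have hsumre : ∑ j ∈ Finset.range M, Real.cos ((j : ℝ) * φ) =
      ((z ^ M - 1) / (z - 1)).re := by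
    rw [← hgeom, Complex.re_sum]
    exact Finset.sum_congr rfl fun j _ => (hre j).symm
  rcases Nat.even_or_odd m with he | ho
  · rw [if_pos he, hsumre, hzM, he.neg_one_pow]
    simp
  · rw [if_neg ((Nat.not_even_iff_odd.mpr ho)), hsumre, hzM, ho.neg_one_pow]
    have hzre : z.re = Real.cos φ := Complex.exp_ofReal_mul_I_re φ
    have hzim : z.im = Real.sin φ := by
      rw [hz]; exact Complex.exp_ofReal_mul_I_im φ
    have hcos1 : Real.cos φ ≠ 1 := by
      intro h
      have := (Real.cos_eq_one_iff_of_lt_of_lt (by linarith) hφ2).mp h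
      linarith
    have hns : Complex.normSq (z - 1) = 2 - 2 * Real.cos φ := by
      rw [Complex.normSq_apply]
      simp only [Complex.sub_re, Complex.sub_im, Complex.one_re, Complex.one_im]
      rw [hzre, hzim]
      nlinarith [Real.sin_sq_add_cos_sq φ]
    have hnsne : (2 : ℝ) - 2 * Real.cos φ ≠ 0 := by
      intro h; apply hcos1; linarith
    rw [Complex.div_re, hns]
    simp only [Complex.sub_re, Complex.sub_im, Complex.one_re, Complex.one_im]
    rw [hzre, hzim]
    norm_num
    field_simp
    ring

private lemma aux_orth (M k l : ℕ) (hM : 1 ≤ M) (hk1 : 1 ≤ k) (hk2 : k ≤ M - 1)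
    (hl1 : 1 ≤ l) (hl2 : l ≤ M - 1) :
    ∑ j ∈ Finset.Icc 1 (M - 1),
        Real.sin ((k : ℝ) * j * (Real.pi / M)) * Real.sin ((l : ℝ) * j * (Real.pi / M)) =
      if k = l then (M : ℝ) / 2 else 0 := by
  wlog hlk : l ≤ k with H
  · have h2 := H M l k hM hl1 hl2 hk1 hk2 (by omega)
    calc ∑ j ∈ Finset.Icc 1 (M - 1),
          Real.sin ((k : ℝ) * j * (Real.pi / M)) * Real.sin ((l : ℝ) * j * (Real.pi / M))
        = ∑ j ∈ Finset.Icc 1 (M - 1),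
          Real.sin ((l : ℝ) * j * (Real.pi / M)) * Real.sin ((k : ℝ) * j * (Real.pi / M)) :=
          Finset.sum_congr rfl fun j _ => mul_comm _ _
      _ = if l = k then (M : ℝ) / 2 else 0 := h2
      _ = if k = l then (M : ℝ) / 2 else 0 := by
          by_cases h : k = l
          · simp [h]
          · rw [if_neg h, if_neg (fun hh => h hh.symm)]
  have key : ∀ j : ℕ,
      Real.sin ((k : ℝ) * j * (Real.pi / M)) * Real.sin ((l : ℝ) * j * (Real.pi / M)) =
        (Real.cos ((j : ℝ) * (((k - l : ℕ) : ℝ) * Real.pi / M)) -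
          Real.cos ((j : ℝ) * (((k + l : ℕ) : ℝ) * Real.pi / M))) / 2 := by
    intro j
    have e1 : (j : ℝ) * (((k - l : ℕ) : ℝ) * Real.pi / M) =
        (k : ℝ) * j * (Real.pi / M) - (l : ℝ) * j * (Real.pi / M) := by
      rw [Nat.cast_sub hlk]; ring
    have e2 : (j : ℝ) * (((k + l : ℕ) : ℝ) * Real.pi / M) =
        (k : ℝ) * j * (Real.pi / M) + (l : ℝ) * j * (Real.pi / M) := by
      push_cast; ring
    rw [e1, e2]
    have h1 := Real.cos_sub ((k : ℝ) * j * (Real.pi / M)) ((l : ℝ) * j * (Real.pi / M))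
    have h2 := Real.cos_add ((k : ℝ) * j * (Real.pi / M)) ((l : ℝ) * j * (Real.pi / M))
    linarith
  rw [Finset.sum_congr rfl fun j _ => key j]
  rw [← Finset.sum_div, Finset.sum_sub_distrib]
  have hsum2 : ∑ j ∈ Finset.Icc 1 (M - 1),
      Real.cos ((j : ℝ) * (((k + l : ℕ) : ℝ) * Real.pi / M)) = (if Even (k + l) then 0 else 1) - 1 := by
    rw [aux_icc_sum M hM, aux_cos_sum M (k + l) hM (by omega) (by omega)]
    norm_num
  by_cases hkl : k = l
  · rw [if_pos hkl]
    have hd : k - l = 0 := by omega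
    have hsum1 : ∑ j ∈ Finset.Icc 1 (M - 1),
        Real.cos ((j : ℝ) * (((k - l : ℕ) : ℝ) * Real.pi / M)) = (M : ℝ) - 1 := by
      have : ∀ j : ℕ, Real.cos ((j : ℝ) * (((k - l : ℕ) : ℝ) * Real.pi / M)) = 1 := by
        intro j; rw [hd]; simp
      rw [Finset.sum_congr rfl fun j _ => this j, Finset.sum_const, Nat.card_Icc]
      have h1 : M - 1 + 1 - 1 = M - 1 := by omega
      rw [h1, nsmul_eq_mul, mul_one, Nat.cast_sub hM, Nat.cast_one]
    have heven : Even (k + l) := ⟨l, by omega⟩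
    rw [hsum1, hsum2, if_pos heven]
    ring
  · rw [if_neg hkl]
    have hd1 : 1 ≤ k - l := by omega
    have hsum1 : ∑ j ∈ Finset.Icc 1 (M - 1),
        Real.cos ((j : ℝ) * (((k - l : ℕ) : ℝ) * Real.pi / M)) = (if Even (k - l) then 0 else 1) - 1 := by
      rw [aux_icc_sum M hM, aux_cos_sum M (k - l) hM (by omega) (by omega)]
      norm_num
    have hpar : Even (k - l) ↔ Even (k + l) := by rw [Nat.even_sub hlk, Nat.even_add]
    rw [hsum1, hsum2]
    by_cases he : Even (k + l)
    · rw [if_pos he, if_pos (hpar.mpr he)]; ring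
    · rw [if_neg he, if_neg (fun h => he (hpar.mp h))]; ring

private noncomputable def sfun (θ : ℝ) (j m : ℕ) : ℝ := Real.sin ((m : ℝ) * (j : ℝ) * θ)

private lemma sfun_zero (θ : ℝ) (j : ℕ) : sfun θ j 0 = 0 := by simp [sfun]

private lemma sfun_M (Mn : ℕ) (hMn : 1 ≤ Mn) (j : ℕ) : sfun (Real.pi / Mn) j Mn = 0 := by
  have hM0 : (Mn : ℝ) ≠ 0 := by exact_mod_cast (by omega : Mn ≠ 0)
  have : (Mn : ℝ) * (j : ℝ) * (Real.pi / Mn) = (j : ℝ) * Real.pi := by field_simp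
  rw [sfun, this]
  exact Real.sin_nat_mul_pi j

private lemma aux_row (Mn : ℕ) (hMn : 2 ≤ Mn) (a b : ℝ) (j : ℕ) (i : Fin (Mn - 1)) :
    ∑ p : Fin (Mn - 1),
      (if (i : ℕ) = (p : ℕ) then a
        else if (i : ℕ) = (p : ℕ) + 1 ∨ (p : ℕ) = (i : ℕ) + 1 then b else 0) *
        sfun (Real.pi / Mn) j ((p : ℕ) + 1) =
      (a + 2 * b * Real.cos ((j : ℝ) * (Real.pi / Mn))) * sfun (Real.pi / Mn) j ((i : ℕ) + 1) := by
  set θ : ℝ := Real.pi / Mn with hθ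
  have hsplit : ∀ p : Fin (Mn - 1),
      (if (i : ℕ) = (p : ℕ) then a
        else if (i : ℕ) = (p : ℕ) + 1 ∨ (p : ℕ) = (i : ℕ) + 1 then b else 0) *
        sfun θ j ((p : ℕ) + 1) =
      (if (p : ℕ) = (i : ℕ) then a * sfun θ j ((i : ℕ) + 1) else 0) +
      ((if (p : ℕ) + 1 = (i : ℕ) then b * sfun θ j (i : ℕ) else 0) +
       (if (p : ℕ) = (i : ℕ) + 1 then b * sfun θ j ((i : ℕ) + 2) else 0)) := by
    intro p
    by_cases h1 : (i : ℕ) = (p : ℕ)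
    · rw [if_pos h1, if_pos h1.symm, if_neg (by omega), if_neg (by omega), ← h1]
      ring
    · rw [if_neg h1, if_neg (show ¬(p : ℕ) = (i : ℕ) from fun h => h1 h.symm)]
      by_cases h2 : (i : ℕ) = (p : ℕ) + 1 ∨ (p : ℕ) = (i : ℕ) + 1
      · rw [if_pos h2]
        rcases h2 with h2 | h2
        · rw [if_pos (show (p : ℕ) + 1 = (i : ℕ) from h2.symm),
            if_neg (show ¬(p : ℕ) = (i : ℕ) + 1 by omega), ← h2]
          ring
        · rw [if_neg (show ¬(p : ℕ) + 1 = (i : ℕ) by omega), if_pos h2,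
            show (p : ℕ) + 1 = (i : ℕ) + 2 by omega]
          ring
      · rw [if_neg h2, if_neg (show ¬(p : ℕ) + 1 = (i : ℕ) by omega),
          if_neg (show ¬(p : ℕ) = (i : ℕ) + 1 by omega)]
        ring
  rw [Finset.sum_congr rfl fun p _ => hsplit p, Finset.sum_add_distrib, Finset.sum_add_distrib]
  have S1 : (∑ p : Fin (Mn - 1), if (p : ℕ) = (i : ℕ) then a * sfun θ j ((i : ℕ) + 1) else 0) =
      a * sfun θ j ((i : ℕ) + 1) := by
    rw [aux_fin_sum_ite, dif_pos i.isLt]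
  have S2 : (∑ p : Fin (Mn - 1), if (p : ℕ) + 1 = (i : ℕ) then b * sfun θ j (i : ℕ) else 0) =
      b * sfun θ j (i : ℕ) := by
    rcases Nat.eq_zero_or_pos (i : ℕ) with h0 | h1
    · rw [Finset.sum_eq_zero fun p _ => if_neg (by omega), h0, sfun_zero, mul_zero]
    · have hc : ∑ p : Fin (Mn - 1), (if (p : ℕ) + 1 = (i : ℕ) then b * sfun θ j (i : ℕ) else 0) =
          ∑ p : Fin (Mn - 1), (if (p : ℕ) = (i : ℕ) - 1 then b * sfun θ j (i : ℕ) else 0) :=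
        Finset.sum_congr rfl fun p _ => if_congr (by omega) rfl rfl
      rw [hc, aux_fin_sum_ite, dif_pos (by omega : (i : ℕ) - 1 < Mn - 1)]
  have S3 : (∑ p : Fin (Mn - 1), if (p : ℕ) = (i : ℕ) + 1 then b * sfun θ j ((i : ℕ) + 2) else 0) =
      b * sfun θ j ((i : ℕ) + 2) := by
    rw [aux_fin_sum_ite]
    by_cases h : (i : ℕ) + 1 < Mn - 1
    · rw [dif_pos h]
    · rw [dif_neg h, show (i : ℕ) + 2 = Mn by omega, sfun_M Mn (by omega) j, mul_zero]
  rw [S1, S2, S3]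
  have e1 : ((i : ℕ) : ℝ) * (j : ℝ) * θ = (((i : ℕ) + 1 : ℕ) : ℝ) * (j : ℝ) * θ - (j : ℝ) * θ := by
    push_cast; ring
  have e2 : (((i : ℕ) + 2 : ℕ) : ℝ) * (j : ℝ) * θ =
      (((i : ℕ) + 1 : ℕ) : ℝ) * (j : ℝ) * θ + (j : ℝ) * θ := by
    push_cast; ring
  simp only [sfun]
  rw [e1, e2, Real.sin_sub, Real.sin_add]
  ring


private lemma aux_TW (Mn : ℕ) (hMn : 2 ≤ Mn) (a b : ℝ)
    (hlam : ∀ x : ℝ, 0 < a + 2 * b * Real.cos x) :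
    (Matrix.of fun i k : Fin (Mn - 1) =>
      if (i : ℕ) = (k : ℕ) then a
      else if (i : ℕ) = (k : ℕ) + 1 ∨ (k : ℕ) = (i : ℕ) + 1 then b else 0) *
    (Matrix.of fun p k : Fin (Mn - 1) =>
      ∑ j ∈ Finset.Icc 1 (Mn - 1),
        2 / (Mn : ℝ) * (sfun (Real.pi / Mn) j ((p : ℕ) + 1) * sfun (Real.pi / Mn) j ((k : ℕ) + 1)) /
          (a + 2 * b * Real.cos ((j : ℝ) * (Real.pi / Mn)))) = 1 := by
  have hM0 : (Mn : ℝ) ≠ 0 := by exact_mod_cast (by omega : Mn ≠ 0)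
  ext i k
  have hi := i.isLt
  have hk := k.isLt
  rw [Matrix.mul_apply]
  simp only [Matrix.of_apply]
  have step1 : ∀ p : Fin (Mn - 1),
      (if (i : ℕ) = (p : ℕ) then a
        else if (i : ℕ) = (p : ℕ) + 1 ∨ (p : ℕ) = (i : ℕ) + 1 then b else 0) *
      (∑ j ∈ Finset.Icc 1 (Mn - 1),
        2 / (Mn : ℝ) * (sfun (Real.pi / Mn) j ((p : ℕ) + 1) * sfun (Real.pi / Mn) j ((k : ℕ) + 1)) /
          (a + 2 * b * Real.cos ((j : ℝ) * (Real.pi / Mn)))) =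
      ∑ j ∈ Finset.Icc 1 (Mn - 1),
        ((if (i : ℕ) = (p : ℕ) then a
          else if (i : ℕ) = (p : ℕ) + 1 ∨ (p : ℕ) = (i : ℕ) + 1 then b else 0) *
          sfun (Real.pi / Mn) j ((p : ℕ) + 1)) *
          (2 / (Mn : ℝ) * sfun (Real.pi / Mn) j ((k : ℕ) + 1) /
            (a + 2 * b * Real.cos ((j : ℝ) * (Real.pi / Mn)))) := by
    intro p
    rw [Finset.mul_sum]
    exact Finset.sum_congr rfl fun j _ => by ring
  rw [Finset.sum_congr rfl fun p _ => step1 p, Finset.sum_comm]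
  have step2 : ∀ j ∈ Finset.Icc 1 (Mn - 1),
      (∑ p : Fin (Mn - 1),
        ((if (i : ℕ) = (p : ℕ) then a
          else if (i : ℕ) = (p : ℕ) + 1 ∨ (p : ℕ) = (i : ℕ) + 1 then b else 0) *
          sfun (Real.pi / Mn) j ((p : ℕ) + 1)) *
          (2 / (Mn : ℝ) * sfun (Real.pi / Mn) j ((k : ℕ) + 1) /
            (a + 2 * b * Real.cos ((j : ℝ) * (Real.pi / Mn))))) =
      2 / (Mn : ℝ) * (sfun (Real.pi / Mn) j ((i : ℕ) + 1) * sfun (Real.pi / Mn) j ((k : ℕ) + 1)) := by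
    intro j _
    rw [← Finset.sum_mul, aux_row Mn hMn a b j i]
    have hne : a + 2 * b * Real.cos ((j : ℝ) * (Real.pi / Mn)) ≠ 0 :=
      ne_of_gt (hlam _)
    have key : ∀ X Y Lm : ℝ, Lm ≠ 0 → Lm * X * (2 / (Mn : ℝ) * Y / Lm) = 2 / (Mn : ℝ) * (X * Y) := by
      intro X Y Lm hLm
      field_simp
    exact key _ _ _ hne
  rw [Finset.sum_congr rfl step2, ← Finset.mul_sum]
  have horth := aux_orth Mn ((i : ℕ) + 1) ((k : ℕ) + 1) (by omega) (by omega)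
    (by omega) (by omega) (by omega)
  simp only [sfun]
  rw [horth, Matrix.one_apply]
  by_cases hik : i = k
  · rw [if_pos (by rw [hik]), if_pos hik]
    field_simp
  · rw [if_neg (fun h => hik (Fin.ext (by omega))), if_neg hik, mul_zero]


private lemma aux_sin_sq (Mn j : ℕ) (hMn : 1 ≤ Mn) :
    sfun (Real.pi / Mn) j (Mn - 1) * sfun (Real.pi / Mn) j (Mn - 1) =
      Real.sin ((j : ℝ) * (Real.pi / Mn)) ^ 2 := by
  have hM0 : (Mn : ℝ) ≠ 0 := by exact_mod_cast (by omega : Mn ≠ 0)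
  have e : ((Mn - 1 : ℕ) : ℝ) * (j : ℝ) * (Real.pi / Mn) =
      (j : ℝ) * Real.pi - (j : ℝ) * (Real.pi / Mn) := by
    rw [Nat.cast_sub (by omega : 1 ≤ Mn)]; field_simp; ring
  have hs0 : Real.sin ((j : ℝ) * Real.pi) = 0 := Real.sin_nat_mul_pi j
  have hC : Real.cos ((j : ℝ) * Real.pi) ^ 2 = 1 := by
    have := Real.sin_sq_add_cos_sq ((j : ℝ) * Real.pi)
    nlinarith
  rw [sfun, e, Real.sin_sub, hs0]
  linear_combination (Real.sin ((j : ℝ) * (Real.pi / Mn))) ^ 2 * hC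

private lemma aux_Wval (Mn : ℕ) (hMn : 2 ≤ Mn) (a b : ℝ)
    (hlam : ∀ x : ℝ, 0 < a + 2 * b * Real.cos x) :
    (∑ j ∈ Finset.Icc 1 (Mn - 1),
        2 / (Mn : ℝ) * (sfun (Real.pi / Mn) j (Mn - 1) * sfun (Real.pi / Mn) j (Mn - 1)) /
          (a + 2 * b * Real.cos ((j : ℝ) * (Real.pi / Mn))))
      = 1 / (Mn : ℝ) * ∑ j ∈ Finset.Icc 1 (Mn - 1),
          Real.sin ((j : ℝ) * (Real.pi / Mn)) ^ 2 /
            (a / 2 - b * Real.cos ((j : ℝ) * (Real.pi / Mn))) := by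
  have hM0 : (Mn : ℝ) ≠ 0 := by exact_mod_cast (by omega : Mn ≠ 0)
  rw [Finset.mul_sum]
  refine Finset.sum_nbij' (fun j => Mn - j) (fun j => Mn - j) ?_ ?_ ?_ ?_ ?_
  · intro x hx; simp only [Finset.mem_Icc] at hx ⊢; omega
  · intro x hx; simp only [Finset.mem_Icc] at hx ⊢; omega
  · intro x hx; simp only [Finset.mem_Icc] at hx; show Mn - (Mn - x) = x; omega
  · intro x hx; simp only [Finset.mem_Icc] at hx; show Mn - (Mn - x) = x; omega
  · intro j hj
    simp only [Finset.mem_Icc] at hj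
    rw [aux_sin_sq Mn j (by omega)]
    have harg2 : ((Mn - j : ℕ) : ℝ) * (Real.pi / Mn) = Real.pi - (j : ℝ) * (Real.pi / Mn) := by
      rw [Nat.cast_sub (by omega : j ≤ Mn)]; field_simp
    rw [harg2, Real.sin_pi_sub, Real.cos_pi_sub]
    have hpos := hlam ((j : ℝ) * (Real.pi / Mn))
    rw [show a / 2 - b * -Real.cos ((j : ℝ) * (Real.pi / Mn)) =
        (a + 2 * b * Real.cos ((j : ℝ) * (Real.pi / Mn))) / 2 by ring]
    have hA : a + 2 * b * Real.cos ((j : ℝ) * (Real.pi / Mn)) ≠ 0 := ne_of_gt hpos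
    field_simp


set_option maxHeartbeats 1000000 in
theorem stmt_12 (c K Δt L : ℝ) (hc : 0 < c) (hK : 0 < K) (hΔt : 0 < Δt) (hL : 0 < L)
    (M : ℕ) (hM : 2 ≤ M) :
    let Δz : ℝ := L / M
    let a : ℝ := 2 / 3 * c * Δz + 2 * K * Δt / Δz
    let b : ℝ := 1 / 6 * c * Δz - K * Δt / Δz
    let T : Matrix (Fin (M - 1)) (Fin (M - 1)) ℝ := Matrix.of fun i k =>
      if (i : ℕ) = (k : ℕ) then a
      else if (i : ℕ) = (k : ℕ) + 1 ∨ (k : ℕ) = (i : ℕ) + 1 then b else 0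
    let u : Fin (M - 1) → ℝ := fun i => if (i : ℕ) = M - 2 then b else 0
    let α : ℝ := Δz / L * ∑ j ∈ Finset.Icc 1 (M - 1),
      Real.sin ((j : ℝ) * Real.pi * Δz / L) ^ 2 /
        (a / 2 - b * Real.cos ((j : ℝ) * Real.pi * Δz / L))
    dotProduct u (T⁻¹.mulVec u) - a / 2 = b ^ 2 * α - a / 2 := by
  intro Δz a b T u α
  have hMR : (0 : ℝ) < (M : ℝ) := by exact_mod_cast (by omega : 0 < M)
  have hM0 : (M : ℝ) ≠ 0 := ne_of_gt hMR
  have hL0 : L ≠ 0 := ne_of_gt hL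
  have hΔzdef : Δz = L / M := rfl
  have ha : a = 2 / 3 * c * Δz + 2 * K * Δt / Δz := rfl
  have hb : b = 1 / 6 * c * Δz - K * Δt / Δz := rfl
  have hΔz : 0 < Δz := div_pos hL hMR
  have hKt : 0 < K * Δt / Δz := div_pos (mul_pos hK hΔt) hΔz
  have e1 : a + 2 * b = c * Δz := by rw [ha, hb]; ring
  have e2 : a - 2 * b = 1 / 3 * c * Δz + 4 * (K * Δt / Δz) := by rw [ha, hb]; ring
  have hlam : ∀ x : ℝ, 0 < a + 2 * b * Real.cos x := by
    intro x
    have h1 : 0 < a + 2 * b := by rw [e1]; positivity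
    have h2 : 0 < a - 2 * b := by rw [e2]; positivity
    have hc1 : 0 ≤ 1 + Real.cos x := by linarith [Real.neg_one_le_cos x]
    have hc2 : 0 ≤ 1 - Real.cos x := by linarith [Real.cos_le_one x]
    rcases le_or_gt 0 b with hb0 | hb0
    · have hp := mul_nonneg hb0 hc1
      nlinarith
    · have hp := mul_nonneg (by linarith : (0:ℝ) ≤ -b) hc2
      nlinarith
  set W : Matrix (Fin (M - 1)) (Fin (M - 1)) ℝ := Matrix.of fun p k =>
      ∑ j ∈ Finset.Icc 1 (M - 1),
        2 / (M : ℝ) * (sfun (Real.pi / M) j ((p : ℕ) + 1) * sfun (Real.pi / M) j ((k : ℕ) + 1)) /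
          (a + 2 * b * Real.cos ((j : ℝ) * (Real.pi / M))) with hWdef
  have hTW : T * W = 1 := aux_TW M hM a b hlam
  have hinv : T⁻¹ = W := Matrix.inv_eq_right_inv hTW
  rw [hinv]
  have hMl : M - 2 < M - 1 := by omega
  have hmv : W.mulVec u = fun i => W i ⟨M - 2, hMl⟩ * b := by
    funext i
    show ∑ k, W i k * u k = _
    have : ∀ k : Fin (M - 1), W i k * u k = if (k : ℕ) = M - 2 then W i k * b else 0 := by
      intro k
      show W i k * (if (k : ℕ) = M - 2 then b else 0) = _
      split_ifs <;> simp
    rw [Finset.sum_congr rfl fun k _ => this k, aux_fin_sum_ite, dif_pos hMl]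
  rw [hmv]
  have hdot : dotProduct u (fun i => W i ⟨M - 2, hMl⟩ * b) =
      b ^ 2 * W ⟨M - 2, hMl⟩ ⟨M - 2, hMl⟩ := by
    show (∑ i, u i * (W i ⟨M - 2, hMl⟩ * b)) = _
    have : ∀ i : Fin (M - 1), u i * (W i ⟨M - 2, hMl⟩ * b) =
        if (i : ℕ) = M - 2 then b * (W i ⟨M - 2, hMl⟩ * b) else 0 := by
      intro i
      show (if (i : ℕ) = M - 2 then b else 0) * _ = _
      split_ifs <;> simp
    rw [Finset.sum_congr rfl fun i _ => this i, aux_fin_sum_ite, dif_pos hMl]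
    ring
  rw [hdot]
  have hαdef : α = Δz / L * ∑ j ∈ Finset.Icc 1 (M - 1),
      Real.sin ((j : ℝ) * Real.pi * Δz / L) ^ 2 /
        (a / 2 - b * Real.cos ((j : ℝ) * Real.pi * Δz / L)) := rfl
  have hzL : Δz / L = 1 / (M : ℝ) := by rw [hΔzdef]; field_simp
  have harg : ∀ j : ℕ, (j : ℝ) * Real.pi * Δz / L = (j : ℝ) * (Real.pi / M) := by
    intro j; rw [hΔzdef]; field_simp
  have hWee : W ⟨M - 2, hMl⟩ ⟨M - 2, hMl⟩ = α := by
    rw [hWdef]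
    simp only [Matrix.of_apply]
    have hidx : M - 2 + 1 = M - 1 := by omega
    rw [hidx, aux_Wval M hM a b hlam, hαdef, hzL]
    congr 1
    exact Finset.sum_congr rfl fun j _ => by rw [harg j]
  rw [hWee]
end
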